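/- Let A ∈ ℝ^{n×n}, C ∈ ℝ^{p×n}, L ∈ ℝ^{n×p}, Ĥ ∈ ℝ^{n×r}, and let V₀ ∈ ℝ^{p×t}, W₀ ∈ ℝ^{p×q}, N₀ ∈ ℝ^{p×s} be fixed real matrices. Define the block matrix H(L) = [ C(A − LC)Ĥ , V₀ , W₀ , −C L N₀ , N₀′ ] by horizontal concatenation, where N₀′ ∈ ℝ^{p×s} is a further fixed matrix. Then ‖H(L)‖_F² = vec(L)ᵀ [ (C Ĥ Ĥᵀ Cᵀ + N₀ N₀ᵀ) ⊗ (Cᵀ C) ] vec(L) − 2 ⟨ vec(Cᵀ C A Ĥ Ĥᵀ Cᵀ), vec(L) ⟩ + tr( C A Ĥ Ĥᵀ Aᵀ Cᵀ + V₀V₀ᵀ + W₀W₀ᵀ + N₀′(N₀′)ᵀ ), where ‖·‖_F is the Frobenius norm, tr is the trace, ⊗ is the Kronecker product, and vec is the column-stacking vectorization. -/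

import Mathlib

open Matrix Kronecker

/-- Column-stacking vectorization: `vecCS L (j, i) = L i j`. -/
def vecCS {n p : Type*} (L : Matrix n p ℝ) : p × n → ℝ := fun q => L q.2 q.1

/-- Squared Frobenius norm. -/
def frobSq {m n : Type*} [Fintype m] [Fintype n] (M : Matrix m n ℝ) : ℝ :=
  ∑ i, ∑ j, (M i j) ^ 2

lemma frob_trace {m n : Type*} [Fintype m] [Fintype n] (M : Matrix m n ℝ) :
    frobSq M = Matrix.trace (M * Mᵀ) := by
  simp [frobSq, Matrix.trace, Matrix.mul_apply, Matrix.diag, sq]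

lemma frob_cols {m n₁ n₂ : Type*} [Fintype m] [Fintype n₁] [Fintype n₂]
    (A : Matrix m n₁ ℝ) (B : Matrix m n₂ ℝ) :
    frobSq (Matrix.fromCols A B) = frobSq A + frobSq B := by
  simp [frob_trace, Matrix.transpose_fromCols, Matrix.fromCols_mul_fromRows,
    Matrix.trace_add]

lemma lin {n p : ℕ} (M L : Matrix (Fin n) (Fin p) ℝ) :
    vecCS M ⬝ᵥ vecCS L = Matrix.trace (M * Lᵀ) := by
  simp [vecCS, dotProduct, Matrix.trace, Matrix.mul_apply, Matrix.diag, Fintype.sum_prod_type]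
  exact Finset.sum_comm

lemma quad {n p : ℕ} (L : Matrix (Fin n) (Fin p) ℝ) (B : Matrix (Fin p) (Fin p) ℝ)
    (D : Matrix (Fin n) (Fin n) ℝ) :
    vecCS L ⬝ᵥ ((B ⊗ₖ D).mulVec (vecCS L)) = Matrix.trace (L * B * Lᵀ * Dᵀ) := by
  simp only [vecCS, dotProduct, Matrix.mulVec, Matrix.trace, Matrix.mul_apply, Matrix.diag,
    Fintype.sum_prod_type, Finset.mul_sum, Finset.sum_mul, Matrix.kroneckerMap_apply,
    Matrix.transpose_apply]
  rw [Finset.sum_comm]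
  refine Finset.sum_congr rfl fun x1 _ => ?_
  rw [Finset.sum_comm]
  refine (Finset.sum_congr rfl fun y _ => Finset.sum_comm).trans ?_
  rw [Finset.sum_comm]
  exact Finset.sum_congr rfl fun a _ => Finset.sum_congr rfl fun b _ =>
    Finset.sum_congr rfl fun c _ => by ring

/-- Frobenius-norm size of the residual-zonotope generator
matrix `H(L) = [C(A-LC)Hh, V₀, W₀, -CLN₀, N₀′]` as a quadratic function of
`vec(L)`. -/
theorem stmt9 (n p r t q s : ℕ)
    (A : Matrix (Fin n) (Fin n) ℝ) (C : Matrix (Fin p) (Fin n) ℝ)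
    (L : Matrix (Fin n) (Fin p) ℝ) (Hh : Matrix (Fin n) (Fin r) ℝ)
    (V₀ : Matrix (Fin p) (Fin t) ℝ) (W₀ : Matrix (Fin p) (Fin q) ℝ)
    (N₀ N₀' : Matrix (Fin p) (Fin s) ℝ) :
    frobSq (Matrix.fromCols (Matrix.fromCols (Matrix.fromCols
        (Matrix.fromCols (C * (A - L * C) * Hh) V₀) W₀) (-(C * L * N₀))) N₀') =
      vecCS L ⬝ᵥ (((C * Hh * Hhᵀ * Cᵀ + N₀ * N₀ᵀ) ⊗ₖ (Cᵀ * C)).mulVec (vecCS L))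
      - 2 * (vecCS (Cᵀ * C * A * Hh * Hhᵀ * Cᵀ) ⬝ᵥ vecCS L)
      + Matrix.trace (C * A * Hh * Hhᵀ * Aᵀ * Cᵀ + V₀ * V₀ᵀ + W₀ * W₀ᵀ
          + N₀' * N₀'ᵀ) := by
  rw [frob_cols, frob_cols, frob_cols, frob_cols, quad, lin,
    frob_trace, frob_trace, frob_trace, frob_trace, frob_trace]
  simp only [Matrix.sub_mul, Matrix.mul_sub, Matrix.add_mul, Matrix.mul_add,
    Matrix.transpose_mul, Matrix.transpose_sub, Matrix.transpose_transpose,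
    Matrix.trace_add, Matrix.trace_sub, Matrix.mul_assoc, Matrix.neg_mul,
    Matrix.mul_neg, Matrix.transpose_neg, Matrix.trace_neg, neg_neg]
  have h3 : (C * (L * (C * (Hh * (Hhᵀ * (Cᵀ * (Lᵀ * Cᵀ))))))).trace
      = (L * (C * (Hh * (Hhᵀ * (Cᵀ * (Lᵀ * (Cᵀ * C))))))).trace := by
    rw [Matrix.trace_mul_comm]; congr 1; simp [Matrix.mul_assoc]
  have h4 : (C * (L * (N₀ * (N₀ᵀ * (Lᵀ * Cᵀ))))).trace
      = (L * (N₀ * (N₀ᵀ * (Lᵀ * (Cᵀ * C))))).trace := by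
    rw [Matrix.trace_mul_comm]; congr 1; simp [Matrix.mul_assoc]
  have h2b : (C * (A * (Hh * (Hhᵀ * (Cᵀ * (Lᵀ * Cᵀ)))))).trace
      = (Cᵀ * (C * (A * (Hh * (Hhᵀ * (Cᵀ * Lᵀ)))))).trace := by
    conv_rhs => rw [Matrix.trace_mul_comm]
    congr 1; simp [Matrix.mul_assoc]
  have h2a : (C * (L * (C * (Hh * (Hhᵀ * (Aᵀ * Cᵀ)))))).trace
      = (Cᵀ * (C * (A * (Hh * (Hhᵀ * (Cᵀ * Lᵀ)))))).trace := by
    rw [← Matrix.trace_transpose (C * (L * (C * (Hh * (Hhᵀ * (Aᵀ * Cᵀ))))))]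
    conv_rhs => rw [Matrix.trace_mul_comm]
    congr 1; simp [Matrix.mul_assoc]
  rw [h2a, h2b, h3, h4]; ring
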